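/- arXiv:2106.10238 — 4 statements merged into one kernel-verified Lean document; each statement's English description precedes it below -/
import Mathlib

section
/- For every natural number n, every measurable function g : (Fin n → ℝ) → (Fin n → ℝ), every step size ε ∈ ℝ, and every number of steps L ∈ ℕ, the leapfrog integrator Ψ = S ∘ A_ε^{∘L} is volume preserving: the pushforward of the product of Lebesgue measures on the phase space (Fin n → ℝ) × (Fin n → ℝ) along Ψ equals the product of Lebesgue measures. -/
open MeasureTheory

theorem stmt_4 (n : ℕ) (g : (Fin n → ℝ) → (Fin n → ℝ)) (hg : Measurable g) (ε : ℝ) (L : ℕ) :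
    let φP : ℝ → ((Fin n → ℝ) × (Fin n → ℝ)) → ((Fin n → ℝ) × (Fin n → ℝ)) :=
      fun k x => (x.1, x.2 - k • g x.1)
    let φQ : ℝ → ((Fin n → ℝ) × (Fin n → ℝ)) → ((Fin n → ℝ) × (Fin n → ℝ)) :=
      fun k x => (x.1 + k • x.2, x.2)
    let S : ((Fin n → ℝ) × (Fin n → ℝ)) → ((Fin n → ℝ) × (Fin n → ℝ)) :=
      fun x => (x.1, -x.2)
    let A : ((Fin n → ℝ) × (Fin n → ℝ)) → ((Fin n → ℝ) × (Fin n → ℝ)) :=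
      φP (ε/2) ∘ φQ ε ∘ φP (ε/2)
    let Ψ : ((Fin n → ℝ) × (Fin n → ℝ)) → ((Fin n → ℝ) × (Fin n → ℝ)) :=
      S ∘ A^[L]
    Measure.map Ψ ((volume : Measure (Fin n → ℝ)).prod (volume : Measure (Fin n → ℝ))) =
      (volume : Measure (Fin n → ℝ)).prod (volume : Measure (Fin n → ℝ)) := by
  intro φP φQ S A Ψ
  set μ : Measure (Fin n → ℝ) := volume
  have hP : ∀ k : ℝ, MeasurePreserving (φP k) (μ.prod μ) (μ.prod μ) := by
    intro k
    refine (MeasurePreserving.id μ).skew_product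
      (g := fun q p => p - k • g q) ?_ (Filter.Eventually.of_forall fun q => ?_)
    · exact measurable_snd.sub ((hg.comp measurable_fst).const_smul k)
    · exact (measurePreserving_sub_right μ (k • g q)).map_eq
  have hQ : MeasurePreserving (φQ ε) (μ.prod μ) (μ.prod μ) := by
    have hsw : MeasurePreserving (Prod.swap : (Fin n → ℝ) × (Fin n → ℝ) → _)
        (μ.prod μ) (μ.prod μ) := Measure.measurePreserving_swap
    have hsk : MeasurePreserving
        (fun x : (Fin n → ℝ) × (Fin n → ℝ) => (x.1, x.2 + ε • x.1)) (μ.prod μ) (μ.prod μ) := by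
      refine (MeasurePreserving.id μ).skew_product
        (g := fun p q => q + ε • p) ?_ (Filter.Eventually.of_forall fun p => ?_)
      · exact measurable_snd.add (measurable_fst.const_smul ε)
      · exact (measurePreserving_add_right μ (ε • p)).map_eq
    have : φQ ε = Prod.swap ∘ (fun x : (Fin n → ℝ) × (Fin n → ℝ) => (x.1, x.2 + ε • x.1))
        ∘ Prod.swap := by
      funext x; simp [φQ, add_comm]
    rw [this]
    exact (hsw.comp hsk).comp hsw
  have hS : MeasurePreserving S (μ.prod μ) (μ.prod μ) :=
    (MeasurePreserving.id μ).prod (Measure.measurePreserving_neg μ)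
  have hA : MeasurePreserving A (μ.prod μ) (μ.prod μ) :=
    ((hP (ε/2)).comp (hQ.comp (hP (ε/2))))
  exact (hS.comp (hA.iterate L)).map_eq
end

section
/- Let q⁰, p⁰ ∈ Fin n → ℝ, ε ∈ ℝ, and let (qⁱ, pⁱ) for i = 0, 1, 2, … be the leapfrog trajectory with step size ε started at (q⁰, p⁰). Then for every L ≥ 1, the position after L leapfrog steps satisfies the closed form q^L = q⁰ + ε·L • p⁰ - ε² • ( (L/2) • g(q⁰) + ∑_{k=1}^{L-1} k • g(q^{L-k}) ). -/
/-- The leapfrog trajectory with step size `ε` started at `x = (q⁰, p⁰)`: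
`q^{i+1} = qⁱ + ε • (pⁱ - (ε/2) • g qⁱ)` and `p^{i+1} = pⁱ - (ε/2) • (g qⁱ + g q^{i+1})`. -/
noncomputable def leapfrog {n : ℕ} (g : (Fin n → ℝ) → (Fin n → ℝ)) (ε : ℝ)
    (x : (Fin n → ℝ) × (Fin n → ℝ)) : ℕ → (Fin n → ℝ) × (Fin n → ℝ)
  | 0 => x
  | i + 1 =>
    let q := (leapfrog g ε x i).1
    let p := (leapfrog g ε x i).2
    let q' := q + ε • (p - (ε / 2) • g q)
    (q', p - (ε / 2) • (g q + g q'))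

section
variable {n : ℕ} (g : (Fin n → ℝ) → (Fin n → ℝ)) (ε : ℝ) (q0 p0 : Fin n → ℝ)

lemma lf_succ (i : ℕ) :
    leapfrog g ε (q0, p0) (i + 1) =
      ((leapfrog g ε (q0, p0) i).1 + ε • ((leapfrog g ε (q0, p0) i).2
          - (ε / 2) • g (leapfrog g ε (q0, p0) i).1),
       (leapfrog g ε (q0, p0) i).2 - (ε / 2) • (g (leapfrog g ε (q0, p0) i).1 +
          g ((leapfrog g ε (q0, p0) i).1 + ε • ((leapfrog g ε (q0, p0) i).2
          - (ε / 2) • g (leapfrog g ε (q0, p0) i).1)))) := rfl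

lemma aux_p (L : ℕ) (hL : 1 ≤ L) :
    (leapfrog g ε (q0, p0) L).2 =
      p0 - (ε / 2) • (g q0 + g ((leapfrog g ε (q0, p0) L).1))
        - ε • ∑ j ∈ Finset.Icc 1 (L - 1), g ((leapfrog g ε (q0, p0) j).1) := by
  induction L, hL using Nat.le_induction with
  | base => simp [lf_succ, leapfrog]
  | succ L hL ih =>
      have hsum : Finset.Icc 1 (L + 1 - 1) = Finset.Icc 1 (L - 1 + 1) := by
        congr 1; omega
      rw [lf_succ, hsum, Finset.sum_Icc_succ_top (by omega)]
      have hL1 : L - 1 + 1 = L := by omega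
      rw [hL1]
      simp only [ih, ← lf_succ]
      module
end

theorem aux_q {n : ℕ} (g : (Fin n → ℝ) → (Fin n → ℝ)) (ε : ℝ) (q0 p0 : Fin n → ℝ)
    (L : ℕ) (hL : 1 ≤ L) :
    (leapfrog g ε (q0, p0) L).1 =
      q0 + (ε * L) • p0 -
        ε ^ 2 • (((L : ℝ) / 2) • g q0 +
          ∑ j ∈ Finset.Icc 1 (L - 1), ((L : ℝ) - j) • g ((leapfrog g ε (q0, p0) j).1)) := by
  induction L, hL using Nat.le_induction with
  | base => simp [lf_succ, leapfrog]; module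
  | succ L hL ih =>
      have hsum : Finset.Icc 1 (L + 1 - 1) = Finset.Icc 1 (L - 1 + 1) := by
        congr 1; omega
      have hL1 : L - 1 + 1 = L := by omega
      rw [lf_succ, hsum, Finset.sum_Icc_succ_top (by omega), hL1, aux_p g ε q0 p0 L hL, ih]
      have hsplit : ∑ j ∈ Finset.Icc 1 (L - 1), (((L : ℝ) + 1) - j) • g ((leapfrog g ε (q0, p0) j).1)
          = (∑ j ∈ Finset.Icc 1 (L - 1), ((L : ℝ) - j) • g ((leapfrog g ε (q0, p0) j).1))
            + ∑ j ∈ Finset.Icc 1 (L - 1), g ((leapfrog g ε (q0, p0) j).1) := by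
        rw [← Finset.sum_add_distrib]
        apply Finset.sum_congr rfl
        intro j hj
        module
      push_cast
      rw [hsplit]
      have hLL : ((L : ℝ) + 1) - (L : ℝ) = 1 := by ring
      rw [hLL]
      module

theorem stmt_5 (n : ℕ) (g : (Fin n → ℝ) → (Fin n → ℝ)) (ε : ℝ)
    (q0 p0 : Fin n → ℝ) (L : ℕ) (hL : 1 ≤ L) :
    (leapfrog g ε (q0, p0) L).1 =
      q0 + (ε * L) • p0 -
        ε ^ 2 • (((L : ℝ) / 2) • g q0 +
          ∑ k ∈ Finset.Icc 1 (L - 1), (k : ℝ) • g ((leapfrog g ε (q0, p0) (L - k)).1)) := by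
  have hre : ∑ k ∈ Finset.Icc 1 (L - 1), (k : ℝ) • g ((leapfrog g ε (q0, p0) (L - k)).1)
      = ∑ j ∈ Finset.Icc 1 (L - 1), ((L : ℝ) - j) • g ((leapfrog g ε (q0, p0) j).1) := by
    apply Finset.sum_nbij' (fun k => L - k) (fun j => L - j)
    · intro a ha; simp only [Finset.mem_Icc] at *; omega
    · intro a ha; simp only [Finset.mem_Icc] at *; omega
    · intro a ha; simp only [Finset.mem_Icc] at ha; omega
    · intro a ha; simp only [Finset.mem_Icc] at ha; omega
    · intro a ha
      simp only [Finset.mem_Icc] at ha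
      have : ((L - a : ℕ) : ℝ) = (L : ℝ) - a := by
        have : a ≤ L := by omega
        push_cast [Nat.cast_sub this]; ring
      rw [this]
      congr 1
      · ring
  rw [hre]
  exact aux_q g ε q0 p0 L hL
end

section
/- Let ε > 0, L ≥ 1, and suppose the coordinates of g are uniformly bounded: there are reals M₁ ≤ M₂ with M₁ ≤ (g x) i ≤ M₂ for all x ∈ Fin n → ℝ and all i. Let a, b : Fin n → ℝ and q⁰ ∈ Fin n → ℝ. If the initial momentum p⁰ satisfies, for every coordinate i, p⁰ i ∈ ( (a i - q⁰ i + ((εL)²/2)·M₂)/(εL) , (b i - q⁰ i + ((εL)²/2)·M₁)/(εL) ), then the position q^L after L leapfrog steps of the trajectory started at (q⁰, p⁰) satisfies a i < q^L i < b i for every coordinate i. -/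
set_option maxHeartbeats 1000000 in
theorem stmt_7 (n : ℕ) (g : (Fin n → ℝ) → (Fin n → ℝ)) (ε : ℝ) (hε : 0 < ε)
    (L : ℕ) (hL : 1 ≤ L) (M₁ M₂ : ℝ) (hM : M₁ ≤ M₂)
    (hbound : ∀ (x : Fin n → ℝ) (i : Fin n), M₁ ≤ g x i ∧ g x i ≤ M₂)
    (a b q0 p0 : Fin n → ℝ)
    (hp : ∀ i : Fin n,
      (a i - q0 i + ((ε * L) ^ 2 / 2) * M₂) / (ε * L) < p0 i ∧
      p0 i < (b i - q0 i + ((ε * L) ^ 2 / 2) * M₁) / (ε * L)) :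
    ∀ i : Fin n,
      a i < (leapfrog g ε (q0, p0) L).1 i ∧ (leapfrog g ε (q0, p0) L).1 i < b i := by
  have key : ∀ k : ℕ, ∀ i : Fin n,
      (q0 i + k * ε * p0 i - ε ^ 2 * ((k : ℝ) ^ 2 / 2) * M₂ ≤ (leapfrog g ε (q0, p0) k).1 i ∧
       (leapfrog g ε (q0, p0) k).1 i ≤ q0 i + k * ε * p0 i - ε ^ 2 * ((k : ℝ) ^ 2 / 2) * M₁) ∧
      (p0 i - ε * k * M₂ ≤ (leapfrog g ε (q0, p0) k).2 i ∧
       (leapfrog g ε (q0, p0) k).2 i ≤ p0 i - ε * k * M₁) := by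
    intro k
    induction k with
    | zero => intro i; simp [leapfrog]
    | succ k ih =>
      intro i
      obtain ⟨⟨hq1, hq2⟩, hp1, hp2⟩ := ih i
      have hgQ := hbound (leapfrog g ε (q0, p0) k).1 i
      have hgQ' := hbound ((leapfrog g ε (q0, p0) k).1 +
        ε • ((leapfrog g ε (q0, p0) k).2 - (ε / 2) • g (leapfrog g ε (q0, p0) k).1)) i
      have hstep : leapfrog g ε (q0, p0) (k + 1) =
          ((leapfrog g ε (q0, p0) k).1 +
            ε • ((leapfrog g ε (q0, p0) k).2 - (ε / 2) • g (leapfrog g ε (q0, p0) k).1),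
           (leapfrog g ε (q0, p0) k).2 - (ε / 2) • (g (leapfrog g ε (q0, p0) k).1 +
            g ((leapfrog g ε (q0, p0) k).1 +
              ε • ((leapfrog g ε (q0, p0) k).2 - (ε / 2) • g (leapfrog g ε (q0, p0) k).1)))) := rfl
      rw [hstep]
      simp only [Pi.add_apply, Pi.smul_apply, Pi.sub_apply, smul_eq_mul, Nat.cast_succ]
      have hε2 : (0 : ℝ) ≤ ε ^ 2 / 2 := by positivity
      have hε1 : (0 : ℝ) ≤ ε / 2 := by positivity
      have h1 := mul_le_mul_of_nonneg_left hp1 hε.le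
      have h2 := mul_le_mul_of_nonneg_left hp2 hε.le
      have h3 := mul_le_mul_of_nonneg_left hgQ.1 hε2
      have h4 := mul_le_mul_of_nonneg_left hgQ.2 hε2
      have h5 := mul_le_mul_of_nonneg_left hgQ.1 hε1
      have h6 := mul_le_mul_of_nonneg_left hgQ.2 hε1
      have h7 := mul_le_mul_of_nonneg_left hgQ'.1 hε1
      have h8 := mul_le_mul_of_nonneg_left hgQ'.2 hε1
      refine ⟨⟨?_, ?_⟩, ?_, ?_⟩ <;> nlinarith [h1, h2, h3, h4, h5, h6, h7, h8]
  intro i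
  obtain ⟨hpl, hpu⟩ := hp i
  have hL0 : (0 : ℝ) < (L : ℝ) := by exact_mod_cast Nat.pos_of_ne_zero (by omega)
  have hεL : 0 < ε * L := mul_pos hε hL0
  have h1 := (div_lt_iff₀ hεL).mp hpl
  have h2 := (lt_div_iff₀ hεL).mp hpu
  obtain ⟨⟨hq1, hq2⟩, _⟩ := key L i
  constructor <;> nlinarith []
end

section
/- Let d ∈ ℕ, let T : (Fin d → ℝ) → (Fin d → ℝ) be a measurable map that is an involution (T ∘ T = id) and preserves Lebesgue measure (the pushforward of Lebesgue measure along T equals Lebesgue measure), and let ρ : (Fin d → ℝ) → ℝ be a nonnegative measurable Lebesgue-integrable function. Define the acceptance probability α(x) = min(1, ρ(T x)/ρ(x)) if ρ(x) > 0 and α(x) = 0 otherwise. Then the Metropolis–Hastings step with deterministic proposal T leaves the measure with density ρ invariant: for every Lebesgue-measurable set X, ∫ ( α(x)·1_X(T x) + (1 - α(x))·1_X(x) )·ρ(x) dx = ∫_X ρ(x) dx, where both integrals are with respect to Lebesgue measure on Fin d → ℝ. -/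
open MeasureTheory

/-- The Metropolis–Hastings acceptance probability for the deterministic proposal `T`
and target density `ρ`: `α x = min(1, ρ(T x)/ρ(x))` if `ρ x > 0`, and `0` otherwise. -/
noncomputable def mhAccept {d : ℕ} (T : (Fin d → ℝ) → (Fin d → ℝ))
    (ρ : (Fin d → ℝ) → ℝ) (x : Fin d → ℝ) : ℝ :=
  if 0 < ρ x then min 1 (ρ (T x) / ρ x) else 0

theorem stmt_12 (d : ℕ) (T : (Fin d → ℝ) → (Fin d → ℝ)) (hT : Measurable T)
    (hTT : T ∘ T = id)
    (hTvol : Measure.map T (volume : Measure (Fin d → ℝ)) = volume)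
    (ρ : (Fin d → ℝ) → ℝ) (hρm : Measurable ρ) (hρ0 : ∀ x, 0 ≤ ρ x)
    (hρint : Integrable ρ (volume : Measure (Fin d → ℝ)))
    (X : Set (Fin d → ℝ)) (hX : MeasurableSet X) :
    ∫ x, (mhAccept T ρ x * X.indicator (fun _ => (1 : ℝ)) (T x) +
          (1 - mhAccept T ρ x) * X.indicator (fun _ => (1 : ℝ)) x) * ρ x =
      ∫ x in X, ρ x := by
  set g : (Fin d → ℝ) → ℝ := fun x => min (ρ x) (ρ (T x)) with hgdef
  set ι : (Fin d → ℝ) → ℝ := X.indicator (fun _ => (1 : ℝ)) with hιdef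
  have hTx : ∀ x, T (T x) = x := fun x => congrFun hTT x
  -- α(x) ρ(x) = min(ρ x, ρ (T x))
  have hag : ∀ x, mhAccept T ρ x * ρ x = g x := by
    intro x
    by_cases h : 0 < ρ x
    · simp only [mhAccept, if_pos h, hgdef]
      rw [min_mul_of_nonneg _ _ (le_of_lt h), one_mul,
        div_mul_cancel₀ _ (ne_of_gt h), min_comm]
    · have h0 : ρ x = 0 := le_antisymm (not_lt.1 h) (hρ0 x)
      simp [mhAccept, h, hgdef, h0, min_eq_left (hρ0 (T x))]
  have hgT : ∀ x, g (T x) = g x := by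
    intro x
    simp only [hgdef, hTx x, min_comm]
  have hg0 : ∀ x, 0 ≤ g x := fun x => le_min (hρ0 x) (hρ0 (T x))
  have hgρ : ∀ x, g x ≤ ρ x := fun x => min_le_left _ _
  have hgm : Measurable g := hρm.min (hρm.comp hT)
  have hι0 : ∀ y, 0 ≤ ι y := fun y =>
    Set.indicator_nonneg (fun _ _ => zero_le_one) y
  have hι1 : ∀ y, ι y ≤ 1 := by
    intro y
    by_cases h : y ∈ X <;> simp [hιdef, Set.indicator_apply, h]
  have hιm : Measurable ι := measurable_const.indicator hX
  have hbound : ∀ (j : (Fin d → ℝ) → ℝ), (∀ y, 0 ≤ j y) → (∀ y, j y ≤ 1) →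
      ∀ x, ‖g x * j x‖ ≤ ‖ρ x‖ := by
    intro j hj0 hj1 x
    rw [Real.norm_eq_abs, Real.norm_eq_abs, abs_of_nonneg (mul_nonneg (hg0 x) (hj0 x)),
      abs_of_nonneg (hρ0 x)]
    calc g x * j x ≤ g x * 1 := mul_le_mul_of_nonneg_left (hj1 x) (hg0 x)
      _ = g x := mul_one _
      _ ≤ ρ x := hgρ x
  have hf1 : Integrable (fun x => g x * ι (T x)) volume :=
    hρint.mono ((hgm.mul (hιm.comp hT)).aestronglyMeasurable)
      (ae_of_all _ (hbound (fun x => ι (T x)) (fun x => hι0 _) (fun x => hι1 _)))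
  have hf3 : Integrable (fun x => g x * ι x) volume :=
    hρint.mono ((hgm.mul hιm).aestronglyMeasurable)
      (ae_of_all _ (hbound ι hι0 hι1))
  have hf2 : Integrable (fun x => ι x * ρ x) volume := by
    refine hρint.mono ((hιm.mul hρm).aestronglyMeasurable) (ae_of_all _ fun x => ?_)
    rw [Real.norm_eq_abs, Real.norm_eq_abs, abs_of_nonneg (mul_nonneg (hι0 x) (hρ0 x)),
      abs_of_nonneg (hρ0 x)]
    calc ι x * ρ x ≤ 1 * ρ x := mul_le_mul_of_nonneg_right (hι1 x) (hρ0 x)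
      _ = ρ x := one_mul _
  have key : ∀ x, (mhAccept T ρ x * ι (T x) + (1 - mhAccept T ρ x) * ι x) * ρ x
      = g x * ι (T x) + (ι x * ρ x - g x * ι x) := by
    intro x
    rw [← hag x]; ring
  have hf23 : Integrable (fun x => ι x * ρ x - g x * ι x) volume := hf2.sub hf3
  rw [integral_congr_ae (ae_of_all _ key), integral_add hf1 hf23,
    integral_sub hf2 hf3]
  have hcv : ∫ x, g x * ι (T x) = ∫ x, g x * ι x := by
    have h1 : ∫ x, g x * ι (T x) = ∫ x, (fun y => g y * ι y) (T x) := by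
      refine integral_congr_ae (ae_of_all _ fun x => ?_)
      simp only [hgT x]
    have hsm : AEStronglyMeasurable (fun y => g y * ι y)
        (Measure.map T (volume : Measure (Fin d → ℝ))) := by
      rw [hTvol]; exact (hgm.mul hιm).aestronglyMeasurable
    rw [h1, ← integral_map hT.aemeasurable hsm, hTvol]
  have hind : ∫ x, ι x * ρ x = ∫ x in X, ρ x := by
    have : ∀ x, ι x * ρ x = X.indicator ρ x := by
      intro x
      by_cases h : x ∈ X <;> simp [hιdef, Set.indicator_apply, h]
    rw [integral_congr_ae (ae_of_all _ this), integral_indicator hX]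
  rw [hcv, hind]
  ring
end
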